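/- Let G be a simple undirected graph and v a vertex not dominated by any other vertex. Suppose v has a satellite, i.e., there exist a neighbor p of v and a vertex s at distance 2 from v with N[p] \ N[v] = {s}. Then there exists a minimum 3-path vertex cover C of G such that either v ∈ C, or there is a neighbor u of v with v ∉ C and u ∉ C. -/
import Mathlib


open Finset

variable {V : Type*}

def IsP3VC (G : SimpleGraph V) (C : Finset V) : Prop :=
  ∀ a b c : V, G.Adj a b → G.Adj b c → a ≠ c → a ∈ C ∨ b ∈ C ∨ c ∈ C

def IsMinP3VC (G : SimpleGraph V) (C : Finset V) : Prop :=
  IsP3VC G C ∧ ∀ D : Finset V, IsP3VC G D → C.card ≤ D.card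

/-- closed neighborhood as a finset -/
def CN [Fintype V] [DecidableEq V] (G : SimpleGraph V) [DecidableRel G.Adj] (v : V) :
    Finset V := insert v (G.neighborFinset v)

/-- if `v` is not dominated by any other vertex and has a
satellite, then some minimum 3-path vertex cover `C` either contains `v`, or
avoids `v` together with one of its neighbors. -/
theorem stmt1 [Fintype V] [DecidableEq V] (G : SimpleGraph V) [DecidableRel G.Adj]
    (v : V)
    (hnodom : ¬ ∃ u : V, u ≠ v ∧ G.Adj u v ∧ ∀ w : V, G.Adj u w → w = v ∨ G.Adj v w)
    (hsat : ∃ p s : V, G.Adj v p ∧ s ∉ CN G v ∧ CN G p \ CN G v = {s}) :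
    ∃ C : Finset V, IsMinP3VC G C ∧
      (v ∈ C ∨ ∃ u : V, G.Adj v u ∧ v ∉ C ∧ u ∉ C) := by
  classical
  obtain ⟨p, s, hvp, hsv, hps⟩ := hsat
  -- a minimum 3-path vertex cover exists
  have hne : {n | ∃ C : Finset V, IsP3VC G C ∧ C.card = n}.Nonempty :=
    ⟨(univ : Finset V).card, univ, fun a _ _ _ _ _ => Or.inl (mem_univ a), rfl⟩
  obtain ⟨C, hC, hCcard⟩ := Nat.sInf_mem hne
  have hmin : ∀ D : Finset V, IsP3VC G D → C.card ≤ D.card := by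
    intro D hD
    rw [hCcard]; exact Nat.sInf_le ⟨D, hD, rfl⟩
  by_cases hv : v ∈ C
  · exact ⟨C, ⟨hC, hmin⟩, Or.inl hv⟩
  by_cases hall : ∀ u, G.Adj v u → u ∈ C
  · -- all neighbors of v are in C; swap p for s
    have hp : p ∈ C := hall p hvp
    have hsp : s ≠ p := by
      intro h; subst h
      exact hsv (mem_insert_of_mem (by rwa [SimpleGraph.mem_neighborFinset]))
    have hsvne : s ≠ v := fun h => hsv (h ▸ mem_insert_self s _)
    have hkey : ∀ x, G.Adj p x → x = s ∨ x = v ∨ G.Adj v x := by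
      intro x hx
      by_cases hxv : x ∈ CN G v
      · rcases mem_insert.1 hxv with h | h
        · exact Or.inr (Or.inl h)
        · exact Or.inr (Or.inr ((SimpleGraph.mem_neighborFinset G v x).1 h))
      · have : x ∈ CN G p \ CN G v := by
          refine mem_sdiff.2 ⟨mem_insert_of_mem ?_, hxv⟩
          rwa [SimpleGraph.mem_neighborFinset]
        rw [hps, mem_singleton] at this
        exact Or.inl this
    set C' : Finset V := insert s (C.erase p) with hC'def
    have hmemC' : ∀ x, x ∈ C → x ≠ p → x ∈ C' :=
      fun x hx hxp => mem_insert_of_mem (mem_erase.2 ⟨hxp, hx⟩)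
    have hC' : IsP3VC G C' := by
      intro a b c hab hbc hac
      have horig := hC a b c hab hbc hac
      by_cases hap : a = p
      · subst hap
        -- path p - b - c
        rcases hkey b hab with hb | hb | hb
        · exact Or.inr (Or.inl (hb ▸ mem_insert_self s _))
        · subst hb
          have hc : c ∈ C := hall c hbc
          exact Or.inr (Or.inr (hmemC' c hc (Ne.symm hac)))
        · have hb' : b ∈ C := hall b hb
          exact Or.inr (Or.inl (hmemC' b hb' (fun h => G.irrefl (h ▸ hab))))
      by_cases hcp : c = p
      · subst hcp
        -- path a - b - p
        rcases hkey b hbc.symm with hb | hb | hb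
        · exact Or.inr (Or.inl (hb ▸ mem_insert_self s _))
        · subst hb
          have ha : a ∈ C := hall a hab.symm
          exact Or.inl (hmemC' a ha hac)
        · have hb' : b ∈ C := hall b hb
          exact Or.inr (Or.inl (hmemC' b hb' (fun h => G.irrefl (h ▸ hbc))))
      by_cases hbp : b = p
      · subst hbp
        -- path a - p - c
        rcases hkey a hab.symm with ha | ha | ha
        · exact Or.inl (ha ▸ mem_insert_self s _)
        · -- a = v, so c ≠ v
          rcases hkey c hbc with hc | hc | hc
          · exact Or.inr (Or.inr (hc ▸ mem_insert_self s _))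
          · exact absurd (ha.trans hc.symm) hac
          · have hc' : c ∈ C := hall c hc
            exact Or.inr (Or.inr (hmemC' c hc' (fun h => G.irrefl (h ▸ hbc))))
        · have ha' : a ∈ C := hall a ha
          exact Or.inl (hmemC' a ha' (fun h => G.irrefl (h ▸ hab)))
      · rcases horig with h | h | h
        · exact Or.inl (hmemC' a h hap)
        · exact Or.inr (Or.inl (hmemC' b h hbp))
        · exact Or.inr (Or.inr (hmemC' c h hcp))
    have hcard : C'.card ≤ C.card := by
      have h1 : 1 ≤ C.card := card_pos.2 ⟨p, hp⟩
      have h2 : (C.erase p).card = C.card - 1 := card_erase_of_mem hp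
      have h3 : C'.card ≤ (C.erase p).card + 1 := card_insert_le _ _
      omega
    have hminC' : ∀ D : Finset V, IsP3VC G D → C'.card ≤ D.card :=
      fun D hD => le_trans hcard (hmin D hD)
    have hvC' : v ∉ C' := by
      simp only [hC'def, mem_insert, mem_erase]
      push_neg
      exact ⟨fun h => hsvne h.symm, fun _ => hv⟩
    have hpC' : p ∉ C' := by
      simp only [hC'def, mem_insert, mem_erase]
      push_neg
      exact ⟨fun h => hsp h.symm, fun h => absurd rfl h⟩
    exact ⟨C', ⟨hC', hminC'⟩, Or.inr ⟨p, hvp, hvC', hpC'⟩⟩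
  · push_neg at hall
    obtain ⟨u, hu, huC⟩ := hall
    exact ⟨C, ⟨hC, hmin⟩, Or.inr ⟨u, hu, hv, huC⟩⟩
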